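/- Let J ⊆ S and s ∈ S with s ∉ J, and let J' = {j ∈ J : j < s}. Then t_s τ⁺_J − ((−1)^{#J'} τ⁺_{J∪{s}} + q τ⁻_J) ∈ I_q(∅) and t_s τ⁻_J − ((−1)^{#J'−1} τ⁻_{J∪{s}} + τ⁺_J) ∈ I_q(∅). -/

import Mathlib

/-- The ordered monomial `t_J = t_{j_1} ⋯ t_{j_{#J}}` in the free algebra. -/
noncomputable def tMon (R : Type*) [CommRing R] {S : Type*} [LinearOrder S] (J : Finset S) :
    FreeAlgebra R S :=
  ((J.sort (· ≤ ·)).map (FreeAlgebra.ι R)).prod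

/-- `ℓ_J(I) = Σ_ν (α_ν - ν) = Σ_{i ∈ I} #{j ∈ J \ I : j < i}`. -/
def ellJ {S : Type*} [LinearOrder S] (J I : Finset S) : ℕ :=
  ∑ i ∈ I, ((J \ I).filter (· < i)).card

/-- `τ⁻_J = Σ_{I ⊆ J, #I odd} (-1)^{ℓ_J(I)} (-q)^{(#I-1)/2} t_{J∖I}`. -/
noncomputable def tauMinus (R : Type*) [CommRing R] {S : Type*} [LinearOrder S] (q : R)
    (J : Finset S) : FreeAlgebra R S :=
  ∑ I ∈ J.powerset.filter fun I => ¬ 2 ∣ I.card,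
    ((-1 : R) ^ ellJ J I * (-q) ^ ((I.card - 1) / 2)) • tMon R (J \ I)

/-- `τ⁺_J = Σ_{I ⊆ J, #I even} (-1)^{ℓ_J(I)} (-q)^{#I/2} t_{J∖I}`. -/
noncomputable def tauPlus (R : Type*) [CommRing R] {S : Type*} [LinearOrder S] (q : R)
    (J : Finset S) : FreeAlgebra R S :=
  ∑ I ∈ J.powerset.filter fun I => 2 ∣ I.card,
    ((-1 : R) ^ ellJ J I * (-q) ^ (I.card / 2)) • tMon R (J \ I)

/-- Generators of the ideal `I_q(𝔐)`. -/
def gens (R : Type*) [CommRing R] {S : Type*} [LinearOrder S] (q : R) (M : Set (Finset S)) :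
    Set (FreeAlgebra R S) :=
  (Set.range fun s : S => FreeAlgebra.ι R s ^ 2 - algebraMap R _ q) ∪
  {x | ∃ r s : S, s < r ∧
      x = FreeAlgebra.ι R r * FreeAlgebra.ι R s + FreeAlgebra.ι R s * FreeAlgebra.ι R r
        - 2 * algebraMap R _ q} ∪
  {x | ∃ J ∈ M, x = tauMinus R q J}

/-- The two-sided ideal `I_q(𝔐)` of the free algebra. -/
noncomputable def Iq (R : Type*) [CommRing R] {S : Type*} [LinearOrder S] (q : R)
    (M : Set (Finset S)) : TwoSidedIdeal (FreeAlgebra R S) :=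
  TwoSidedIdeal.span (gens R q M)

section Infra
variable {R A : Type*} [Semiring R] [Semiring A] [Module R A] [IsScalarTower R A A]
  [SMulCommClass R A A]

instance ringConQuotModule (c : RingCon A) : Module R c.Quotient where
  __ := (inferInstance : DistribMulAction R c.Quotient)
  add_smul a b := Quotient.ind' fun x =>
    congrArg (RingCon.toQuotient (c := c)) (add_smul a b x)
  zero_smul := Quotient.ind' fun x =>
    congrArg (RingCon.toQuotient (c := c)) (zero_smul R x)

end Infra


section TMon
variable (R : Type*) [CommRing R] {S : Type*} [LinearOrder S]

lemma tMon_empty : tMon R (∅ : Finset S) = 1 := by simp [tMon]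

lemma tMon_insert_min {s : S} {K : Finset S} (hs : s ∉ K) (h : ∀ k ∈ K, s ≤ k) :
    tMon R (insert s K) = FreeAlgebra.ι R s * tMon R K := by
  unfold tMon
  rw [Finset.sort_insert _ h hs, List.map_cons, List.prod_cons]

lemma tMon_singleton (s : S) : tMon R ({s} : Finset S) = FreeAlgebra.ι R s := by
  rw [tMon, Finset.sort_singleton, List.map_singleton, List.prod_singleton]

end TMon

section Lemmas
variable {S : Type*} [LinearOrder S] {R : Type*} [CommRing R] (q : R)

/-- The ring congruence of `Iq`. -/
noncomputable abbrev rcq : RingCon (FreeAlgebra R S) :=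
  (Iq R q (∅ : Set (Finset S))).ringCon

/-- Projection to the quotient. -/
noncomputable def piQ : FreeAlgebra R S →+* (rcq q (S := S)).Quotient :=
  RingCon.mk' _

lemma mem_Iq_iff (x : FreeAlgebra R S) :
    x ∈ Iq R q (∅ : Set (Finset S)) ↔ piQ q x = 0 := by
  rw [TwoSidedIdeal.mem_iff]
  exact ⟨fun h => (RingCon.eq _).mpr h, fun h => (RingCon.eq _).mp (by exact h)⟩

lemma piQ_smul (r : R) (x : FreeAlgebra R S) : piQ q (r • x) = r • piQ q x := rfl

lemma piQ_sq (s : S) :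
    piQ q (FreeAlgebra.ι R s) * piQ q (FreeAlgebra.ι R s) = q • 1 := by
  have h : (FreeAlgebra.ι R s ^ 2 - algebraMap R _ q) ∈ Iq R q (∅ : Set (Finset S)) :=
    TwoSidedIdeal.subset_span (Or.inl (Or.inl ⟨s, rfl⟩))
  rw [mem_Iq_iff, map_sub, sub_eq_zero, sq, map_mul] at h
  rw [h, Algebra.algebraMap_eq_smul_one, piQ_smul, map_one]

lemma piQ_comm {r s : S} (h : r ≠ s) :
    piQ q (FreeAlgebra.ι R s) * piQ q (FreeAlgebra.ι R r)
      + piQ q (FreeAlgebra.ι R r) * piQ q (FreeAlgebra.ι R s) = (2 * q) • 1 := by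
  have key : ∀ a b : S, b < a →
      piQ q (FreeAlgebra.ι R b) * piQ q (FreeAlgebra.ι R a)
        + piQ q (FreeAlgebra.ι R a) * piQ q (FreeAlgebra.ι R b) = (2 * q) • 1 := by
    intro a b hlt
    have h : (FreeAlgebra.ι R a * FreeAlgebra.ι R b + FreeAlgebra.ι R b * FreeAlgebra.ι R a
        - 2 * algebraMap R _ q) ∈ Iq R q (∅ : Set (Finset S)) :=
      TwoSidedIdeal.subset_span (Or.inl (Or.inr ⟨a, b, hlt, rfl⟩))
    rw [show (2 : FreeAlgebra R S) * algebraMap R _ q = algebraMap R _ (2 * q) by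
        rw [map_mul, map_ofNat],
      mem_Iq_iff, map_sub, sub_eq_zero, map_add, map_mul, map_mul] at h
    rw [add_comm, h, Algebra.algebraMap_eq_smul_one, piQ_smul, map_one]
  rcases h.lt_or_gt with hlt | hlt
  · rw [add_comm]; exact key s r hlt
  · exact key r s hlt

lemma piQ_swap {k s : S} (h : k ≠ s) (x : (rcq q (S := S)).Quotient) :
    piQ q (FreeAlgebra.ι R s) * (piQ q (FreeAlgebra.ι R k) * x)
      = (2 * q) • x - piQ q (FreeAlgebra.ι R k) * (piQ q (FreeAlgebra.ι R s) * x) := by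
  have := piQ_comm q h
  have h2 : piQ q (FreeAlgebra.ι R s) * piQ q (FreeAlgebra.ι R k)
      = (2 * q) • 1 - piQ q (FreeAlgebra.ι R k) * piQ q (FreeAlgebra.ι R s) := by
    rw [← this]; exact (add_sub_cancel_right _ _).symm
  rw [← mul_assoc, h2, sub_mul, smul_mul_assoc, one_mul, mul_assoc]

end Lemmas

section LemA
variable {S : Type*} [LinearOrder S] {R : Type*} [CommRing R] (q : R)

lemma lemA (s : S) (K : Finset S) (hs : s ∉ K) :
    piQ q (FreeAlgebra.ι R s * tMon R K)
      = ((-1 : R) ^ (K.filter (· < s)).card) • piQ q (tMon R (insert s K))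
        + ∑ k ∈ K.filter (· < s),
            (2 * q * (-1 : R) ^ (K.filter (· < k)).card) • piQ q (tMon R (K.erase k)) := by
  induction K using Finset.strongInduction with
  | _ K IH =>
  rcases eq_or_ne K ∅ with rfl | hK
  · simp [tMon_empty, tMon_singleton]
  have hKne : K.Nonempty := Finset.nonempty_iff_ne_empty.mpr hK
  set m := K.min' hKne with hm
  have hmK : m ∈ K := K.min'_mem hKne
  have hmmin : ∀ k ∈ K, m ≤ k := fun k hk => K.min'_le k hk
  have hms : m ≠ s := fun h => hs (h ▸ hmK)
  rcases hms.lt_or_gt with hlt | hlt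
  · -- m < s
    set K' := K.erase m with hK'
    have hmK' : m ∉ K' := Finset.notMem_erase m K
    have hK'min : ∀ k ∈ K', m ≤ k := fun k hk => hmmin k (Finset.mem_of_mem_erase hk)
    have hKins : insert m K' = K := Finset.insert_erase hmK
    have hsK' : s ∉ K' := fun h => hs (Finset.mem_of_mem_erase h)
    have htm : tMon R K = FreeAlgebra.ι R m * tMon R K' := by
      rw [← hKins]; exact tMon_insert_min R hmK' hK'min
    have hsub : K' ⊂ K := Finset.erase_ssubset hmK
    have hIH := IH K' hsub hsK'
    have e1 : piQ q (FreeAlgebra.ι R m) * piQ q (tMon R (insert s K'))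
        = piQ q (tMon R (insert s K)) := by
      rw [← map_mul, ← tMon_insert_min R (by simp [hmK', hms]) ?min, Finset.insert_comm, hKins]
      case min =>
        intro k hk
        rcases Finset.mem_insert.mp hk with rfl | hk
        · exact hlt.le
        · exact hK'min k hk
    have e2 : ∀ k ∈ K'.filter (· < s),
        piQ q (FreeAlgebra.ι R m) * piQ q (tMon R (K'.erase k))
          = piQ q (tMon R (K.erase k)) := by
      intro k hk
      have hkK' : k ∈ K' := Finset.mem_of_mem_filter _ hk
      have hkm : k ≠ m := Finset.ne_of_mem_erase hkK'
      rw [← map_mul, ← tMon_insert_min R (by simp [hkm.symm, hmK'])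
        (fun j hj => hK'min j (Finset.mem_of_mem_erase hj))]
      congr 1
      rw [← Finset.erase_insert_of_ne hkm.symm, hKins]
    have hfilt : K.filter (· < s) = insert m (K'.filter (· < s)) := by
      conv_lhs => rw [← hKins]
      rw [Finset.filter_insert, if_pos hlt]
    have hmnot : m ∉ K'.filter (· < s) := fun h => hmK' (Finset.mem_of_mem_filter _ h)
    have hcard : (K.filter (· < s)).card = (K'.filter (· < s)).card + 1 := by
      rw [hfilt, Finset.card_insert_of_notMem hmnot]
    have hfm : K.filter (· < m) = ∅ := by
      rw [Finset.filter_eq_empty_iff]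
      exact fun k hk => not_lt.mpr (hmmin k hk)
    have hck : ∀ k ∈ K'.filter (· < s),
        (K.filter (· < k)).card = (K'.filter (· < k)).card + 1 := by
      intro k hk
      have hkK' : k ∈ K' := Finset.mem_of_mem_filter _ hk
      have hkm : m < k := lt_of_le_of_ne (hK'min k hkK') (Finset.ne_of_mem_erase hkK').symm
      have : K.filter (· < k) = insert m (K'.filter (· < k)) := by
        conv_lhs => rw [← hKins]
        rw [Finset.filter_insert, if_pos hkm]
      rw [this, Finset.card_insert_of_notMem (fun h => hmK' (Finset.mem_of_mem_filter _ h))]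
    set P := piQ q (tMon R K') with hP
    set Y := piQ q (tMon R (insert s K)) with hY
    set T := K'.filter (· < s) with hT
    set c' : R := (-1 : R) ^ (K'.filter (· < s)).card with hc'
    set F : S → R := fun k => 2 * q * (-1 : R) ^ (K'.filter (· < k)).card with hF
    set G : S → (rcq q (S := S)).Quotient := fun k => piQ q (tMon R (K.erase k)) with hG
    have lhs_eq : piQ q (FreeAlgebra.ι R s * tMon R K)
        = (2 * q) • P - (c' • Y + ∑ k ∈ T, F k • G k) := by
      rw [htm, map_mul, map_mul, piQ_swap q hms, ← map_mul, hIH, mul_add, Finset.mul_sum,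
        mul_smul_comm, e1]
      congr 1
      congr 1
      exact Finset.sum_congr rfl (fun k hk => by rw [mul_smul_comm, e2 k hk])
    have rhs_eq : ((-1 : R) ^ (K.filter (· < s)).card) • Y
          + ∑ k ∈ K.filter (· < s),
              (2 * q * (-1 : R) ^ (K.filter (· < k)).card) • G k
        = (-c') • Y + ((2 * q) • P + ∑ k ∈ T, (-(F k)) • G k) := by
      rw [hcard, pow_succ, mul_neg_one, neg_smul, hfilt, Finset.sum_insert hmnot, hfm]
      rw [Finset.card_empty, pow_zero, mul_one]
      have hGm : G m = P := rfl
      rw [hGm]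
      congr 2
      exact Finset.sum_congr rfl (fun k hk => by
        rw [hck k hk, pow_succ]
        congr 1
        rw [hF]
        ring)
    rw [lhs_eq, rhs_eq]
    simp only [neg_smul, Finset.sum_neg_distrib]
    abel
  · -- s < m : no element of K is < s
    have hfe : K.filter (· < s) = ∅ := by
      rw [Finset.filter_eq_empty_iff]
      intro k hk
      exact not_lt.mpr ((hmmin k hk).trans' hlt.le)
    have : tMon R (insert s K) = FreeAlgebra.ι R s * tMon R K :=
      tMon_insert_min R hs (fun k hk => (hlt.trans_le (hmmin k hk)).le)
    rw [hfe, this, map_mul]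
    simp

end LemA

section Comb
variable {S : Type*} [LinearOrder S]

lemma neg_one_pow_congr_mod {R : Type*} [CommRing R] {a b : ℕ} (h : a % 2 = b % 2) :
    (-1 : R) ^ a = (-1 : R) ^ b := by
  rw [neg_one_pow_eq_pow_mod_two, h, ← neg_one_pow_eq_pow_mod_two]

/-- splitting a filter card over `J = (J \ I) ∪ I`. -/
lemma card_filter_sdiff_add {J I : Finset S} (hIJ : I ⊆ J) (p : S → Prop) [DecidablePred p] :
    ((J \ I).filter p).card + (I.filter p).card = (J.filter p).card := by
  rw [← Finset.card_union_of_disjoint, ← Finset.filter_union, Finset.sdiff_union_of_subset hIJ]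
  exact Finset.disjoint_filter_filter (Finset.sdiff_disjoint)

lemma card_filter_lt_add_gt {I : Finset S} {s : S} (hs : s ∉ I) :
    (I.filter (· < s)).card + (I.filter (s < ·)).card = I.card := by
  have : I.filter (s < ·) = I.filter (fun x => ¬ x < s) :=
    Finset.filter_congr (fun x hx => by
      have : x ≠ s := fun h => hs (h ▸ hx)
      constructor
      · intro h; exact not_lt.mpr h.le
      · intro h; exact lt_of_le_of_ne (not_lt.mp h) this.symm)
  rw [this, Finset.card_filter_add_card_filter_not]

lemma sdiff_insert_insert {J I : Finset S} {s : S} (hs : s ∉ J) (hIJ : I ⊆ J) :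
    insert s J \ insert s I = J \ I := by
  ext x
  simp only [Finset.mem_sdiff, Finset.mem_insert]
  constructor
  · rintro ⟨rfl | hxJ, hx⟩
    · exact absurd (Or.inl rfl) hx
    · exact ⟨hxJ, fun h => hx (Or.inr h)⟩
  · rintro ⟨hxJ, hxI⟩
    exact ⟨Or.inr hxJ, by
      rintro (rfl | h)
      exacts [hs hxJ, hxI h]⟩

lemma sdiff_insert_left {J I : Finset S} {s : S} (hsI : s ∉ I) :
    insert s J \ I = insert s (J \ I) := by
  rw [Finset.insert_sdiff_of_notMem _ hsI]

lemma ell_insert_left {J I : Finset S} {s : S} (hsJ : s ∉ J) (hsI : s ∉ I) :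
    ellJ (insert s J) I = ellJ J I + (I.filter (s < ·)).card := by
  unfold ellJ
  have step : ∀ i ∈ I, ((insert s J \ I).filter (· < i)).card
      = ((J \ I).filter (· < i)).card + (if s < i then 1 else 0) := by
    intro i _
    rw [sdiff_insert_left hsI, Finset.filter_insert]
    by_cases h : s < i
    · rw [if_pos h, if_pos h, Finset.card_insert_of_notMem
        (fun hc => (Finset.mem_sdiff.mp (Finset.mem_of_mem_filter _ hc)).1 |> hsJ)]
    · rw [if_neg h, if_neg h, add_zero]
  rw [Finset.sum_congr rfl step, Finset.sum_add_distrib]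
  congr 1
  rw [Finset.card_filter]

lemma ell_insert_both {J I : Finset S} {s : S} (hs : s ∉ J) (hIJ : I ⊆ J) :
    ellJ (insert s J) (insert s I) = ellJ J I + ((J \ I).filter (· < s)).card := by
  have hsI : s ∉ I := fun h => hs (hIJ h)
  unfold ellJ
  rw [sdiff_insert_insert hs hIJ, Finset.sum_insert hsI, add_comm]

lemma ell_erase {J I : Finset S} {k : S} (hk : k ∈ I) (hIJ : I ⊆ J) :
    ellJ J (I.erase k) + ((J \ I.erase k).filter (· < k)).card
      = ellJ J I + (I.filter (k < ·)).card := by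
  have hJd : J \ I.erase k = insert k (J \ I) := by
    ext x
    simp only [Finset.mem_sdiff, Finset.mem_erase, Finset.mem_insert]
    constructor
    · rintro ⟨hxJ, hx⟩
      by_cases hxk : x = k
      · exact Or.inl hxk
      · exact Or.inr ⟨hxJ, fun h => hx ⟨hxk, h⟩⟩
    · rintro (rfl | ⟨hxJ, hxI⟩)
      · exact ⟨hIJ hk, fun h => h.1 rfl⟩
      · exact ⟨hxJ, fun h => hxI h.2⟩
  have hknot : k ∉ J \ I := fun h => (Finset.mem_sdiff.mp h).2 hk
  unfold ellJ
  rw [hJd]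
  have step : ∀ i ∈ I.erase k,
      ((insert k (J \ I)).filter (· < i)).card
        = ((J \ I).filter (· < i)).card + (if k < i then 1 else 0) := by
    intro i _
    rw [Finset.filter_insert]
    by_cases h : k < i
    · rw [if_pos h, if_pos h,
        Finset.card_insert_of_notMem (fun hc => hknot (Finset.mem_of_mem_filter _ hc))]
    · rw [if_neg h, if_neg h, add_zero]
  rw [Finset.sum_congr rfl step, Finset.sum_add_distrib]
  have h1 : ∑ i ∈ I.erase k, (if k < i then 1 else 0) = (I.filter (k < ·)).card := by
    rw [Finset.card_filter]
    rw [← Finset.sum_erase_add _ _ hk, if_neg (lt_irrefl k), add_zero]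
  have h2 : ∀ i ∈ I.erase k, ((J \ I).filter (· < i)).card
      = ((J \ I).filter (· < i)).card := fun _ _ => rfl
  have h3 : ∑ i ∈ I, ((J \ I).filter (· < i)).card
      = ∑ i ∈ I.erase k, ((J \ I).filter (· < i)).card + ((J \ I).filter (· < k)).card :=
    (Finset.sum_erase_add _ _ hk).symm
  -- note: the filter(< k) card over (insert k (J\I)) equals over (J\I) since ¬ k<k
  have h4 : ((insert k (J \ I)).filter (· < k)).card = ((J \ I).filter (· < k)).card := by
    rw [Finset.filter_insert, if_neg (lt_irrefl k)]
  rw [h1, h4, h3]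
  omega

/-- The alternating sum over positions. -/
lemma altSum {R : Type*} [CommRing R] (T : Finset S) :
    ∑ k ∈ T, ((-1 : R) ^ (T.filter (· < k)).card)
      = if 2 ∣ T.card then 0 else 1 := by
  induction T using Finset.strongInduction with
  | _ T IH =>
  rcases eq_or_ne T ∅ with rfl | hT
  · simp
  have hTne : T.Nonempty := Finset.nonempty_iff_ne_empty.mpr hT
  set m := T.max' hTne with hm
  have hmT : m ∈ T := T.max'_mem hTne
  have hmax : ∀ k ∈ T, k ≤ m := fun k hk => T.le_max' k hk
  have hfm : T.filter (· < m) = T.erase m := by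
    ext x
    simp only [Finset.mem_filter, Finset.mem_erase]
    constructor
    · rintro ⟨hx, hlt⟩; exact ⟨ne_of_lt hlt, hx⟩
    · rintro ⟨hne, hx⟩; exact ⟨hx, lt_of_le_of_ne (hmax x hx) hne⟩
  have hcard : T.card = (T.erase m).card + 1 := by
    rw [Finset.card_erase_of_mem hmT]
    have := Finset.card_pos.mpr hTne
    omega
  have hstep : ∀ k ∈ T.erase m, T.filter (· < k) = (T.erase m).filter (· < k) := by
    intro k hk
    rw [Finset.filter_erase]
    rw [Finset.erase_eq_of_notMem]
    intro hmem
    have := (Finset.mem_filter.mp hmem).2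
    exact absurd ((hmax k (Finset.mem_of_mem_erase hk)).trans_lt' this).false (by simp)
  rw [← Finset.sum_erase_add _ _ hmT, Finset.sum_congr rfl (fun k hk => by rw [hstep k hk]),
    IH (T.erase m) (Finset.erase_ssubset hmT), hfm, hcard]
  rcases Nat.even_or_odd (T.erase m).card with he | ho
  · obtain ⟨c, hc⟩ := he
    rw [if_pos (show 2 ∣ (T.erase m).card by omega),
      if_neg (show ¬ 2 ∣ (T.erase m).card + 1 by omega), zero_add,
      Even.neg_one_pow ⟨c, hc⟩]
  · obtain ⟨c, hc⟩ := ho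
    rw [if_neg (show ¬ 2 ∣ (T.erase m).card by omega),
      if_pos (show 2 ∣ (T.erase m).card + 1 by omega),
      Odd.neg_one_pow ⟨c, hc⟩]
    ring

end Comb

section Keys
variable {S : Type*} [LinearOrder S] {R : Type*} [CommRing R]

lemma scalar_key (q x : R) (ℓ a a₀ b' : ℕ) (h : a₀ = b' + a) :
    (2 * q * x * (-1 : R) ^ ℓ) * (if 2 ∣ a then 0 else 1)
      = (-1 : R) ^ a₀ * ((-1 : R) ^ (ℓ + b') * (-q * x)) + q * ((-1 : R) ^ ℓ * x) := by
  subst h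
  have base : (-1 : R) ^ (b' + a) * (-1 : R) ^ (ℓ + b') = (-1 : R) ^ (a + ℓ) := by
    rw [← pow_add, neg_one_pow_congr_mod (show (b' + a + (ℓ + b')) % 2 = (a + ℓ) % 2 by omega)]
  rcases Nat.even_or_odd a with he | ho
  · obtain ⟨c, hc⟩ := he
    rw [if_pos (show 2 ∣ a by omega), mul_zero]
    have : (-1 : R) ^ (a + ℓ) = (-1 : R) ^ ℓ :=
      neg_one_pow_congr_mod (show (a + ℓ) % 2 = ℓ % 2 by omega)
    linear_combination (q * x) * base + (q * x) * this
  · obtain ⟨c, hc⟩ := ho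
    rw [if_neg (show ¬ 2 ∣ a by omega), mul_one]
    have : (-1 : R) ^ (a + ℓ) = -(-1 : R) ^ ℓ := by
      rw [neg_one_pow_congr_mod (show (a + ℓ) % 2 = (ℓ + 1) % 2 by omega), pow_succ]
      ring
    linear_combination (q * x) * base + (q * x) * this

lemma scalar_key2 (x : R) (ℓ a a₀ b' : ℕ) (h : a₀ = b' + a) :
    (2 * x * (-1 : R) ^ ℓ) * (if 2 ∣ a then 0 else 1)
      = (-1 : R) ^ (a₀ + 1) * ((-1 : R) ^ (ℓ + b') * x) + (-1 : R) ^ ℓ * x := by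
  subst h
  have base : (-1 : R) ^ (b' + a + 1) * (-1 : R) ^ (ℓ + b') = (-1 : R) ^ (a + ℓ + 1) := by
    rw [← pow_add, neg_one_pow_congr_mod (show (b' + a + 1 + (ℓ + b')) % 2 = (a + ℓ + 1) % 2 by omega)]
  rcases Nat.even_or_odd a with he | ho
  · obtain ⟨c, hc⟩ := he
    rw [if_pos (show 2 ∣ a by omega), mul_zero]
    have : (-1 : R) ^ (a + ℓ + 1) = -(-1 : R) ^ ℓ := by
      rw [neg_one_pow_congr_mod (show (a + ℓ + 1) % 2 = (ℓ + 1) % 2 by omega), pow_succ]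
      ring
    linear_combination (-x) * base + (-x) * this
  · obtain ⟨c, hc⟩ := ho
    rw [if_neg (show ¬ 2 ∣ a by omega), mul_one]
    have : (-1 : R) ^ (a + ℓ + 1) = (-1 : R) ^ ℓ :=
      neg_one_pow_congr_mod (show (a + ℓ + 1) % 2 = ℓ % 2 by omega)
    linear_combination (-x) * base + (-x) * this

lemma sdiff_erase_erase {J I : Finset S} {k : S} (hk : k ∈ I) (hIJ : I ⊆ J) :
    (J \ I.erase k).erase k = J \ I := by
  ext x
  simp only [Finset.mem_erase, Finset.mem_sdiff]
  constructor
  · rintro ⟨hxk, hxJ, hxI⟩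
    exact ⟨hxJ, fun h => hxI ⟨hxk, h⟩⟩
  · rintro ⟨hxJ, hxI⟩
    exact ⟨fun h => hxI (by rw [h]; exact hk), hxJ, fun h => hxI h.2⟩

lemma filter_lt_erase {I : Finset S} {k : S} :
    (I.erase k).filter (· < k) = I.filter (· < k) := by
  rw [Finset.filter_erase]
  apply Finset.erase_eq_of_notMem
  simp

lemma filter_gt_erase {I : Finset S} {k : S} :
    (I.erase k).filter (k < ·) = I.filter (k < ·) := by
  rw [Finset.filter_erase]
  apply Finset.erase_eq_of_notMem
  simp

lemma filter_lt_filter_lt {I : Finset S} {k s : S} (hks : k < s) :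
    (I.filter (· < s)).filter (· < k) = I.filter (· < k) := by
  rw [Finset.filter_filter]
  exact Finset.filter_congr (fun x _ => ⟨fun h => h.2, fun h => ⟨h.trans hks, h⟩⟩)

end Keys

section Inner
variable {S : Type*} [LinearOrder S] {R : Type*} [CommRing R] (q : R)

lemma inner_sum_plus {J I' : Finset S} {s : S} (hs : s ∉ J) (hI'J : I' ⊆ J)
    (hodd : ¬ 2 ∣ I'.card) :
    ∑ k ∈ I'.filter (· < s),
        ((-1 : R) ^ ellJ J (I'.erase k) * (-q) ^ ((I'.erase k).card / 2))
          * (2 * q * (-1 : R) ^ (((J \ I'.erase k).filter (· < k)).card))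
      = (-1 : R) ^ (J.filter (· < s)).card
          * ((-1 : R) ^ ellJ (insert s J) (insert s I') * (-q) ^ ((insert s I').card / 2))
        + q * ((-1 : R) ^ ellJ J I' * (-q) ^ ((I'.card - 1) / 2)) := by
  have hsI' : s ∉ I' := fun h => hs (hI'J h)
  obtain ⟨c, hc⟩ : Odd I'.card := Nat.odd_iff.mpr (by omega)
  set T := I'.filter (· < s) with hT
  have step : ∀ k ∈ T,
      ((-1 : R) ^ ellJ J (I'.erase k) * (-q) ^ ((I'.erase k).card / 2))
          * (2 * q * (-1 : R) ^ (((J \ I'.erase k).filter (· < k)).card))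
        = (2 * q * (-q) ^ ((I'.card - 1) / 2) * (-1 : R) ^ ellJ J I')
            * (-1 : R) ^ ((T.filter (· < k)).card) := by
    intro k hk
    obtain ⟨hkI', hks⟩ := Finset.mem_filter.mp hk
    have hce : (I'.erase k).card = I'.card - 1 := Finset.card_erase_of_mem hkI'
    have he := ell_erase hkI' hI'J
    have hfk : T.filter (· < k) = I'.filter (· < k) := filter_lt_filter_lt hks
    have hsum : (I'.filter (· < k)).card + (I'.filter (k < ·)).card = I'.card - 1 := by
      have h1 := card_filter_lt_add_gt (I := I'.erase k) (s := k) (Finset.notMem_erase k I')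
      rwa [filter_lt_erase, filter_gt_erase, hce] at h1
    have hsign : (-1 : R) ^ ellJ J (I'.erase k)
          * (-1 : R) ^ (((J \ I'.erase k).filter (· < k)).card)
        = (-1 : R) ^ ellJ J I' * (-1 : R) ^ ((T.filter (· < k)).card) := by
      rw [← pow_add, ← pow_add]
      apply neg_one_pow_congr_mod
      have hcard' : (T.filter (· < k)).card = (I'.filter (· < k)).card := by rw [hfk]
      omega
    rw [hce]
    linear_combination (2 * q * (-q) ^ ((I'.card - 1) / 2)) * hsign
  rw [Finset.sum_congr rfl step, ← Finset.mul_sum, altSum]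
  have hb : ((J \ I').filter (· < s)).card + T.card = (J.filter (· < s)).card :=
    card_filter_sdiff_add hI'J _
  rw [ell_insert_both hs hI'J, Finset.card_insert_of_notMem hsI',
    show (I'.card + 1) / 2 = (I'.card - 1) / 2 + 1 by omega]
  linear_combination scalar_key q ((-q) ^ ((I'.card - 1) / 2)) (ellJ J I') T.card
    (J.filter (· < s)).card ((J \ I').filter (· < s)).card hb.symm

lemma inner_sum_minus {J I' : Finset S} {s : S} (hs : s ∉ J) (hI'J : I' ⊆ J)
    (heven : 2 ∣ I'.card) :
    ∑ k ∈ I'.filter (· < s),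
        ((-1 : R) ^ ellJ J (I'.erase k) * (-q) ^ (((I'.erase k).card - 1) / 2))
          * (2 * q * (-1 : R) ^ (((J \ I'.erase k).filter (· < k)).card))
      = (-1 : R) ^ ((J.filter (· < s)).card + 1)
          * ((-1 : R) ^ ellJ (insert s J) (insert s I')
              * (-q) ^ (((insert s I').card - 1) / 2))
        + (-1 : R) ^ ellJ J I' * (-q) ^ (I'.card / 2) := by
  have hsI' : s ∉ I' := fun h => hs (hI'J h)
  obtain ⟨c, hc⟩ : ∃ c, I'.card = 2 * c := heven
  set T := I'.filter (· < s) with hT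
  have step : ∀ k ∈ T,
      ((-1 : R) ^ ellJ J (I'.erase k) * (-q) ^ (((I'.erase k).card - 1) / 2))
          * (2 * q * (-1 : R) ^ (((J \ I'.erase k).filter (· < k)).card))
        = (2 * (-q) ^ (I'.card / 2) * (-1 : R) ^ ellJ J I')
            * (-1 : R) ^ ((T.filter (· < k)).card) := by
    intro k hk
    obtain ⟨hkI', hks⟩ := Finset.mem_filter.mp hk
    have hpos : 1 ≤ I'.card := Finset.card_pos.mpr ⟨k, hkI'⟩
    have hge2 : 2 ≤ I'.card := by omega
    have hce : (I'.erase k).card = I'.card - 1 := Finset.card_erase_of_mem hkI'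
    have he := ell_erase hkI' hI'J
    have hfk : T.filter (· < k) = I'.filter (· < k) := filter_lt_filter_lt hks
    have hsum : (I'.filter (· < k)).card + (I'.filter (k < ·)).card = I'.card - 1 := by
      have h1 := card_filter_lt_add_gt (I := I'.erase k) (s := k) (Finset.notMem_erase k I')
      rwa [filter_lt_erase, filter_gt_erase, hce] at h1
    have hsign : (-1 : R) ^ ellJ J (I'.erase k)
          * (-1 : R) ^ (((J \ I'.erase k).filter (· < k)).card)
        = (-1 : R) ^ (ellJ J I' + 1) * (-1 : R) ^ ((T.filter (· < k)).card) := by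
      rw [← pow_add, ← pow_add]
      apply neg_one_pow_congr_mod
      have hcard' : (T.filter (· < k)).card = (I'.filter (· < k)).card := by rw [hfk]
      omega
    have hq : q * (-q) ^ ((I'.card - 1 - 1) / 2) = -(-q) ^ (I'.card / 2) := by
      rw [show I'.card / 2 = (I'.card - 1 - 1) / 2 + 1 by omega, pow_succ]
      ring
    rw [hce]
    calc ((-1 : R) ^ ellJ J (I'.erase k) * (-q) ^ ((I'.card - 1 - 1) / 2))
          * (2 * q * (-1 : R) ^ (((J \ I'.erase k).filter (· < k)).card))
        = ((-1 : R) ^ ellJ J (I'.erase k)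
            * (-1 : R) ^ (((J \ I'.erase k).filter (· < k)).card))
            * (2 * (q * (-q) ^ ((I'.card - 1 - 1) / 2))) := by ring
      _ = ((-1 : R) ^ (ellJ J I' + 1) * (-1 : R) ^ ((T.filter (· < k)).card))
            * (2 * (-(-q) ^ (I'.card / 2))) := by rw [hsign, hq]
      _ = (2 * (-q) ^ (I'.card / 2) * (-1 : R) ^ ellJ J I')
            * (-1 : R) ^ ((T.filter (· < k)).card) := by rw [pow_succ]; ring
  rw [Finset.sum_congr rfl step, ← Finset.mul_sum, altSum]
  have hb : ((J \ I').filter (· < s)).card + T.card = (J.filter (· < s)).card :=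
    card_filter_sdiff_add hI'J _
  rw [ell_insert_both hs hI'J, Finset.card_insert_of_notMem hsI',
    show (I'.card + 1 - 1) / 2 = I'.card / 2 by omega]
  linear_combination scalar_key2 ((-q) ^ (I'.card / 2)) (ellJ J I') T.card
    (J.filter (· < s)).card ((J \ I').filter (· < s)).card hb.symm

end Inner

section Struct
variable {S : Type*} [LinearOrder S] {R : Type*} [CommRing R] (q : R)

lemma sum_powerset_insert_split {M : Type*} [AddCommMonoid M] {J : Finset S} {s : S} (hs : s ∉ J)
    (p : ℕ → Prop) [DecidablePred p] (F : Finset S → M) :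
    ∑ I ∈ (insert s J).powerset.filter (fun I => p I.card), F I
      = ∑ I ∈ J.powerset.filter (fun I => p I.card), F I
        + ∑ I ∈ J.powerset.filter (fun I => p (I.card + 1)), F (insert s I) := by
  have hdisj : Disjoint (J.powerset.filter (fun I => p I.card))
      ((J.powerset.image (insert s)).filter (fun I => p I.card)) := by
    rw [Finset.disjoint_left]
    intro I hI1 hI2
    obtain ⟨I', hI', hins⟩ := Finset.mem_image.mp (Finset.mem_filter.mp hI2).1
    have hsI : s ∈ I := hins ▸ Finset.mem_insert_self s I'
    exact hs (Finset.mem_powerset.mp (Finset.mem_filter.mp hI1).1 hsI)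
  rw [Finset.powerset_insert, Finset.filter_union, Finset.sum_union hdisj]
  congr 1
  rw [Finset.filter_image, Finset.sum_image (fun x hx y hy hxy => by
    have hxs : s ∉ x := fun h => hs (Finset.mem_powerset.mp (Finset.mem_filter.mp hx).1 h)
    have hys : s ∉ y := fun h => hs (Finset.mem_powerset.mp (Finset.mem_filter.mp hy).1 h)
    rw [← Finset.erase_insert hxs, ← Finset.erase_insert hys, hxy])]
  apply Finset.sum_congr
  · exact Finset.filter_congr (fun I hI => by
      rw [Finset.card_insert_of_notMem (fun h => hs (Finset.mem_powerset.mp hI h))])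
  · exact fun _ _ => rfl

lemma reindex {M : Type*} [AddCommMonoid M] (J : Finset S) (s : S)
    (p p' : ℕ → Prop) [DecidablePred p] [DecidablePred p'] (hpq : ∀ n, p' (n + 1) ↔ p n)
    (f : Finset S → S → M) :
    ∑ I ∈ J.powerset.filter (fun I => p I.card), ∑ k ∈ (J \ I).filter (· < s), f I k
      = ∑ I ∈ J.powerset.filter (fun I => p' I.card), ∑ k ∈ I.filter (· < s), f (I.erase k) k := by
  rw [Finset.sum_sigma', Finset.sum_sigma']
  refine Finset.sum_nbij' (fun x => ⟨insert x.2 x.1, x.2⟩) (fun x => ⟨x.1.erase x.2, x.2⟩)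
    ?_ ?_ ?_ ?_ ?_
  · rintro ⟨I, k⟩ hx
    rw [Finset.mem_sigma] at hx ⊢
    obtain ⟨hI, hk⟩ := hx
    obtain ⟨hIJ, hp⟩ := Finset.mem_filter.mp hI
    have hIJ' := Finset.mem_powerset.mp hIJ
    obtain ⟨hkJI, hks⟩ := Finset.mem_filter.mp hk
    obtain ⟨hkJ, hkI⟩ := Finset.mem_sdiff.mp hkJI
    constructor
    · refine Finset.mem_filter.mpr ⟨Finset.mem_powerset.mpr ?_, ?_⟩
      · exact Finset.insert_subset hkJ hIJ'
      · rw [Finset.card_insert_of_notMem hkI]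
        exact (hpq I.card).mpr hp
    · exact Finset.mem_filter.mpr ⟨Finset.mem_insert_self k I, hks⟩
  · rintro ⟨I, k⟩ hx
    rw [Finset.mem_sigma] at hx ⊢
    obtain ⟨hI, hk⟩ := hx
    obtain ⟨hIJ, hp⟩ := Finset.mem_filter.mp hI
    have hIJ' := Finset.mem_powerset.mp hIJ
    obtain ⟨hkI, hks⟩ := Finset.mem_filter.mp hk
    constructor
    · refine Finset.mem_filter.mpr ⟨Finset.mem_powerset.mpr
        ((Finset.erase_subset k I).trans hIJ'), ?_⟩
      have hcard : (I.erase k).card + 1 = I.card := Finset.card_erase_add_one hkI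
      rw [← hcard] at hp
      exact (hpq _).mp hp
    · refine Finset.mem_filter.mpr ⟨Finset.mem_sdiff.mpr
        ⟨hIJ' hkI, Finset.notMem_erase k I⟩, hks⟩
  · rintro ⟨I, k⟩ hx
    rw [Finset.mem_sigma] at hx
    obtain ⟨hkJ, hkI⟩ := Finset.mem_sdiff.mp (Finset.mem_filter.mp hx.2).1
    simp only [Finset.erase_insert hkI]
  · rintro ⟨I, k⟩ hx
    rw [Finset.mem_sigma] at hx
    have hkI := (Finset.mem_filter.mp hx.2).1
    simp only [Finset.insert_erase hkI]
  · rintro ⟨I, k⟩ hx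
    rw [Finset.mem_sigma] at hx
    obtain ⟨hkJ, hkI⟩ := Finset.mem_sdiff.mp (Finset.mem_filter.mp hx.2).1
    simp only [Finset.erase_insert hkI]

lemma first_sign_plus {J I : Finset S} {s : S} (hs : s ∉ J) (hIJ : I ⊆ J) (hpar : 2 ∣ I.card) :
    ((-1 : R) ^ ellJ J I * (-q) ^ (I.card / 2)) * (-1 : R) ^ (((J \ I).filter (· < s)).card)
      = (-1 : R) ^ (J.filter (· < s)).card
          * ((-1 : R) ^ ellJ (insert s J) I * (-q) ^ (I.card / 2)) := by
  have hsI : s ∉ I := fun h => hs (hIJ h)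
  rw [ell_insert_left hs hsI]
  have h1 : ((J \ I).filter (· < s)).card + (I.filter (· < s)).card
      = (J.filter (· < s)).card := card_filter_sdiff_add hIJ _
  have h2 : (I.filter (· < s)).card + (I.filter (s < ·)).card = I.card :=
    card_filter_lt_add_gt hsI
  have key : (-1 : R) ^ (ellJ J I + ((J \ I).filter (· < s)).card)
      = (-1 : R) ^ ((J.filter (· < s)).card + (ellJ J I + (I.filter (s < ·)).card)) :=
    neg_one_pow_congr_mod (by omega)
  linear_combination (-q) ^ (I.card / 2) * key

lemma first_sign_minus {J I : Finset S} {s : S} (hs : s ∉ J) (hIJ : I ⊆ J)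
    (hpar : ¬ 2 ∣ I.card) :
    ((-1 : R) ^ ellJ J I * (-q) ^ ((I.card - 1) / 2)) * (-1 : R) ^ (((J \ I).filter (· < s)).card)
      = (-1 : R) ^ ((J.filter (· < s)).card + 1)
          * ((-1 : R) ^ ellJ (insert s J) I * (-q) ^ ((I.card - 1) / 2)) := by
  have hsI : s ∉ I := fun h => hs (hIJ h)
  rw [ell_insert_left hs hsI]
  have h1 : ((J \ I).filter (· < s)).card + (I.filter (· < s)).card
      = (J.filter (· < s)).card := card_filter_sdiff_add hIJ _
  have h2 : (I.filter (· < s)).card + (I.filter (s < ·)).card = I.card :=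
    card_filter_lt_add_gt hsI
  have key : (-1 : R) ^ (ellJ J I + ((J \ I).filter (· < s)).card)
      = (-1 : R) ^ ((J.filter (· < s)).card + 1 + (ellJ J I + (I.filter (s < ·)).card)) :=
    neg_one_pow_congr_mod (by omega)
  linear_combination (-q) ^ ((I.card - 1) / 2) * key

end Struct

section Main
variable {S : Type*} [LinearOrder S] {R : Type*} [CommRing R] (q : R)

lemma main_plus {J : Finset S} {s : S} (hs : s ∉ J) :
    piQ q (FreeAlgebra.ι R s * tauPlus R q J)
      = piQ q (((-1 : R) ^ (J.filter (· < s)).card) • tauPlus R q (insert s J)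
          + q • tauMinus R q J) := by
  have hsJI : ∀ I : Finset S, s ∉ J \ I := fun I h => hs (Finset.mem_sdiff.mp h).1
  have hL : piQ q (FreeAlgebra.ι R s * tauPlus R q J)
      = (∑ I ∈ J.powerset.filter (fun I => 2 ∣ I.card),
          (((-1 : R) ^ ellJ J I * (-q) ^ (I.card / 2))
            * (-1 : R) ^ (((J \ I).filter (· < s)).card))
            • piQ q (tMon R (insert s (J \ I))))
        + ∑ I ∈ J.powerset.filter (fun I => 2 ∣ I.card),
            ∑ k ∈ (J \ I).filter (· < s),
              (((-1 : R) ^ ellJ J I * (-q) ^ (I.card / 2))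
                * (2 * q * (-1 : R) ^ (((J \ I).filter (· < k)).card)))
                • piQ q (tMon R ((J \ I).erase k)) := by
    rw [tauPlus, Finset.mul_sum, map_sum, ← Finset.sum_add_distrib]
    refine Finset.sum_congr rfl (fun I hI => ?_)
    rw [mul_smul_comm, piQ_smul, lemA q s (J \ I) (hsJI I), smul_add, smul_smul,
      Finset.smul_sum]
    congr 1
    exact Finset.sum_congr rfl (fun k _ => smul_smul _ _ _)
  have hR : piQ q (((-1 : R) ^ (J.filter (· < s)).card) • tauPlus R q (insert s J)
          + q • tauMinus R q J)
      = (∑ I ∈ J.powerset.filter (fun I => 2 ∣ I.card),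
          ((-1 : R) ^ (J.filter (· < s)).card
            * ((-1 : R) ^ ellJ (insert s J) I * (-q) ^ (I.card / 2)))
            • piQ q (tMon R (insert s (J \ I))))
        + ∑ I ∈ J.powerset.filter (fun I => ¬ 2 ∣ I.card),
            ((-1 : R) ^ (J.filter (· < s)).card
              * ((-1 : R) ^ ellJ (insert s J) (insert s I) * (-q) ^ ((insert s I).card / 2))
             + q * ((-1 : R) ^ ellJ J I * (-q) ^ ((I.card - 1) / 2)))
              • piQ q (tMon R (J \ I)) := by
    rw [map_add, piQ_smul, piQ_smul, tauPlus, tauMinus,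
      sum_powerset_insert_split hs (fun n => 2 ∣ n), map_add, map_sum, map_sum, map_sum,
      smul_add, add_assoc]
    congr 1
    · rw [Finset.smul_sum]
      refine Finset.sum_congr rfl (fun I hI => ?_)
      have hIJ : I ⊆ J := Finset.mem_powerset.mp (Finset.mem_filter.mp hI).1
      have hsI : s ∉ I := fun h => hs (hIJ h)
      rw [piQ_smul, smul_smul, sdiff_insert_left hsI]
    · have hO : J.powerset.filter (fun I => 2 ∣ I.card + 1)
          = J.powerset.filter (fun I => ¬ 2 ∣ I.card) :=
        Finset.filter_congr (fun I _ => ⟨fun h h2 => by omega, fun h => by omega⟩)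
      rw [hO, Finset.smul_sum, Finset.smul_sum, ← Finset.sum_add_distrib]
      refine Finset.sum_congr rfl (fun I hI => ?_)
      have hIJ : I ⊆ J := Finset.mem_powerset.mp (Finset.mem_filter.mp hI).1
      rw [piQ_smul, piQ_smul, smul_smul, smul_smul, sdiff_insert_insert hs hIJ, ← add_smul]
  rw [hL, hR]
  congr 1
  · refine Finset.sum_congr rfl (fun I hI => ?_)
    obtain ⟨hIp, hIpar⟩ := Finset.mem_filter.mp hI
    rw [first_sign_plus q hs (Finset.mem_powerset.mp hIp) hIpar]
  · rw [reindex J s (fun n => 2 ∣ n) (fun n => ¬ 2 ∣ n) (fun n => by omega) _]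
    refine Finset.sum_congr rfl (fun I' hI' => ?_)
    obtain ⟨hI'p, hI'par⟩ := Finset.mem_filter.mp hI'
    have hI'J : I' ⊆ J := Finset.mem_powerset.mp hI'p
    rw [Finset.sum_congr rfl (fun k hk =>
        by rw [sdiff_erase_erase (Finset.mem_filter.mp hk).1 hI'J]),
      ← Finset.sum_smul, inner_sum_plus q hs hI'J hI'par]

lemma main_minus {J : Finset S} {s : S} (hs : s ∉ J) :
    piQ q (FreeAlgebra.ι R s * tauMinus R q J)
      = piQ q (((-1 : R) ^ ((J.filter (· < s)).card + 1)) • tauMinus R q (insert s J)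
          + tauPlus R q J) := by
  have hsJI : ∀ I : Finset S, s ∉ J \ I := fun I h => hs (Finset.mem_sdiff.mp h).1
  have hL : piQ q (FreeAlgebra.ι R s * tauMinus R q J)
      = (∑ I ∈ J.powerset.filter (fun I => ¬ 2 ∣ I.card),
          (((-1 : R) ^ ellJ J I * (-q) ^ ((I.card - 1) / 2))
            * (-1 : R) ^ (((J \ I).filter (· < s)).card))
            • piQ q (tMon R (insert s (J \ I))))
        + ∑ I ∈ J.powerset.filter (fun I => ¬ 2 ∣ I.card),
            ∑ k ∈ (J \ I).filter (· < s),
              (((-1 : R) ^ ellJ J I * (-q) ^ ((I.card - 1) / 2))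
                * (2 * q * (-1 : R) ^ (((J \ I).filter (· < k)).card)))
                • piQ q (tMon R ((J \ I).erase k)) := by
    rw [tauMinus, Finset.mul_sum, map_sum, ← Finset.sum_add_distrib]
    refine Finset.sum_congr rfl (fun I hI => ?_)
    rw [mul_smul_comm, piQ_smul, lemA q s (J \ I) (hsJI I), smul_add, smul_smul,
      Finset.smul_sum]
    congr 1
    exact Finset.sum_congr rfl (fun k _ => smul_smul _ _ _)
  have hR : piQ q (((-1 : R) ^ ((J.filter (· < s)).card + 1)) • tauMinus R q (insert s J)
          + tauPlus R q J)
      = (∑ I ∈ J.powerset.filter (fun I => ¬ 2 ∣ I.card),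
          ((-1 : R) ^ ((J.filter (· < s)).card + 1)
            * ((-1 : R) ^ ellJ (insert s J) I * (-q) ^ ((I.card - 1) / 2)))
            • piQ q (tMon R (insert s (J \ I))))
        + ∑ I ∈ J.powerset.filter (fun I => 2 ∣ I.card),
            ((-1 : R) ^ ((J.filter (· < s)).card + 1)
              * ((-1 : R) ^ ellJ (insert s J) (insert s I)
                  * (-q) ^ (((insert s I).card - 1) / 2))
             + (-1 : R) ^ ellJ J I * (-q) ^ (I.card / 2))
              • piQ q (tMon R (J \ I)) := by
    rw [map_add, piQ_smul, tauMinus, tauPlus,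
      sum_powerset_insert_split hs (fun n => ¬ 2 ∣ n), map_add, map_sum, map_sum, map_sum,
      smul_add, add_assoc]
    congr 1
    · rw [Finset.smul_sum]
      refine Finset.sum_congr rfl (fun I hI => ?_)
      have hIJ : I ⊆ J := Finset.mem_powerset.mp (Finset.mem_filter.mp hI).1
      have hsI : s ∉ I := fun h => hs (hIJ h)
      rw [piQ_smul, smul_smul, sdiff_insert_left hsI]
    · have hO : J.powerset.filter (fun I => ¬ 2 ∣ I.card + 1)
          = J.powerset.filter (fun I => 2 ∣ I.card) :=
        Finset.filter_congr (fun I _ => ⟨fun h => by omega, fun h h2 => by omega⟩)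
      rw [hO, Finset.smul_sum, ← Finset.sum_add_distrib]
      refine Finset.sum_congr rfl (fun I hI => ?_)
      have hIJ : I ⊆ J := Finset.mem_powerset.mp (Finset.mem_filter.mp hI).1
      rw [piQ_smul, piQ_smul, smul_smul, sdiff_insert_insert hs hIJ, ← add_smul]
  rw [hL, hR]
  congr 1
  · refine Finset.sum_congr rfl (fun I hI => ?_)
    obtain ⟨hIp, hIpar⟩ := Finset.mem_filter.mp hI
    rw [first_sign_minus q hs (Finset.mem_powerset.mp hIp) hIpar]
  · rw [reindex J s (fun n => ¬ 2 ∣ n) (fun n => 2 ∣ n) (fun n => by omega) _]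
    refine Finset.sum_congr rfl (fun I' hI' => ?_)
    obtain ⟨hI'p, hI'par⟩ := Finset.mem_filter.mp hI'
    have hI'J : I' ⊆ J := Finset.mem_powerset.mp hI'p
    rw [Finset.sum_congr rfl (fun k hk =>
        by rw [sdiff_erase_erase (Finset.mem_filter.mp hk).1 hI'J]),
      ← Finset.sum_smul, inner_sum_minus q hs hI'J hI'par]

end Main

theorem stmt7 {S : Type*} [Fintype S] [LinearOrder S] {R : Type*} [CommRing R] (q : R)
    (J : Finset S) (s : S) (hs : s ∉ J) :
    FreeAlgebra.ι R s * tauPlus R q J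
        - (((-1 : R) ^ (J.filter (· < s)).card) • tauPlus R q (insert s J)
            + q • tauMinus R q J) ∈ Iq R q (∅ : Set (Finset S)) ∧
    FreeAlgebra.ι R s * tauMinus R q J
        - (((-1 : R) ^ ((J.filter (· < s)).card + 1)) • tauMinus R q (insert s J)
            + tauPlus R q J) ∈ Iq R q (∅ : Set (Finset S)) := by
  constructor
  · rw [mem_Iq_iff, map_sub, sub_eq_zero]
    exact main_plus q hs
  · rw [mem_Iq_iff, map_sub, sub_eq_zero]
    exact main_minus q hs
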